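/- Restrictions of containment structures compose transitively: if χ' is the g'-restriction of a containment structure χ and χ'' is the g''-restriction of χ', where g' : S∪Y → S'∪Y and g'' : S'∪Y → S''∪Y are restriction functions with S'' ⊆ S' ⊆ S, then χ'' equals the (g''∘g')-restriction of χ. -/
import Mathlib


namespace TreeContainment

open scoped Classical

variable {V Λ : Type}

/-- A directed graph with an explicit vertex set. -/
structure DGraph (V : Type) where
  verts : Set V
  Arc : V → V → Prop
  arc_left : ∀ ⦃u v : V⦄, Arc u v → u ∈ verts
  arc_right : ∀ ⦃u v : V⦄, Arc u v → v ∈ verts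

noncomputable def DGraph.inDeg (G : DGraph V) (v : V) : ℕ := {u : V | G.Arc u v}.ncard
noncomputable def DGraph.outDeg (G : DGraph V) (v : V) : ℕ := {u : V | G.Arc v u}.ncard
def DGraph.Acyclic (G : DGraph V) : Prop := ∀ v : V, ¬ Relation.TransGen G.Arc v v

def IsSubgraph (H G : DGraph V) : Prop :=
  H.verts ⊆ G.verts ∧ ∀ ⦃u v⦄, H.Arc u v → G.Arc u v

/-- The consecutive pairs (arcs) of a list of vertices. -/
def listArcs (p : List V) : List (V × V) := p.zip p.tail

def IsArcOf (p : List V) (a b : V) : Prop := (a, b) ∈ listArcs p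

lemma isArcOf_mem_left {p : List V} {a b : V} (h : IsArcOf p a b) : a ∈ p :=
  (List.of_mem_zip h).1

lemma isArcOf_mem_right {p : List V} {a b : V} (h : IsArcOf p a b) : b ∈ p :=
  List.mem_of_mem_tail (List.of_mem_zip h).2

/-- `p` is a directed path from `u` to `v` with respect to the arc relation `A`. -/
def DipathFrom (A : V → V → Prop) (u v : V) (p : List V) : Prop :=
  p.Chain' A ∧ p.Nodup ∧ p.head? = some u ∧ p.getLast? = some v

/-- Rooted binary phylogenetic network. -/
def IsBinPhyloNet (N : DGraph V) : Prop :=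
  N.Acyclic ∧ N.verts.Finite ∧ N.verts.Nonempty ∧
  (∃! ρ, ρ ∈ N.verts ∧ N.inDeg ρ = 0) ∧
  ∀ v ∈ N.verts,
    (N.inDeg v = 0 ∧ N.outDeg v = 2) ∨ (N.inDeg v = 1 ∧ N.outDeg v = 0) ∨
    (N.inDeg v = 2 ∧ N.outDeg v = 1) ∨ (N.inDeg v = 1 ∧ N.outDeg v = 2)

/-- Rooted binary phylogenetic tree: a binary phylogenetic network without reticulations. -/
def IsBinPhyloTree (T : DGraph V) : Prop :=
  IsBinPhyloNet T ∧ ∀ v ∈ T.verts, T.inDeg v ≤ 1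

def leaves (G : DGraph V) : Set V :=
  {v : V | v ∈ G.verts ∧ G.inDeg v = 1 ∧ G.outDeg v = 0}

/-- Equally labelled leaves of `N` and `T` are identified: the common vertices of the two
graphs are exactly the leaves of each side. -/
def SharedLeaves (N T : DGraph V) : Prop :=
  N.verts ∩ T.verts = leaves N ∧ N.verts ∩ T.verts = leaves T

/-- A witness that `H` is a subdivision of the tree `Tg`. -/
structure SubdivWitness (H Tg : DGraph V) where
  vmap : V → V
  pmap : V → V → List V
  vmap_mem : ∀ u ∈ Tg.verts, vmap u ∈ H.verts
  inj : ∀ u ∈ Tg.verts, ∀ v ∈ Tg.verts, vmap u = vmap v → u = v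
  path_spec : ∀ ⦃u v⦄, Tg.Arc u v → DipathFrom H.Arc (vmap u) (vmap v) (pmap u v)
  path_len : ∀ ⦃u v⦄, Tg.Arc u v → 2 ≤ (pmap u v).length
  internal_new : ∀ ⦃u v⦄, Tg.Arc u v → ∀ z ∈ pmap u v, z ≠ vmap u → z ≠ vmap v →
    ∀ w ∈ Tg.verts, vmap w ≠ z
  internal_disjoint : ∀ ⦃u v u' v'⦄, Tg.Arc u v → Tg.Arc u' v' → (u, v) ≠ (u', v') →
    ∀ z, z ∈ pmap u v → z ∈ pmap u' v' →
      (z = vmap u ∨ z = vmap v) ∧ (z = vmap u' ∨ z = vmap v')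
  arcs_cover : ∀ a b, H.Arc a b → ∃ u v, Tg.Arc u v ∧ IsArcOf (pmap u v) a b
  verts_cover : ∀ z ∈ H.verts, (∃ u ∈ Tg.verts, vmap u = z) ∨ ∃ u v, Tg.Arc u v ∧ z ∈ pmap u v

/-- `N` displays `T`: some subgraph of `N` is a subdivision of `T`, respecting
the (identified) leaf labels. -/
def Displays (N T : DGraph V) : Prop :=
  ∃ H : DGraph V, IsSubgraph H N ∧
    ∃ w : SubdivWitness H T, ∀ u ∈ T.verts ∩ N.verts, w.vmap u = u

/-- An embedding function of the tree `Tg` into the network `Ng`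
(an embedding function on the display graph `D(Ng,Tg)`). -/
structure EmbOn (Tg Ng : DGraph V) where
  vmap : V → V
  pmap : V → V → List V
  vmap_mem : ∀ u ∈ Tg.verts, vmap u ∈ Ng.verts
  path_spec : ∀ ⦃u v⦄, Tg.Arc u v → DipathFrom Ng.Arc (vmap u) (vmap v) (pmap u v)
  inj : ∀ u ∈ Tg.verts, ∀ v ∈ Tg.verts, vmap u = vmap v → u = v
  fixes : ∀ u ∈ Tg.verts ∩ Ng.verts, vmap u = u
  arc_disjoint : ∀ ⦃u v u' v'⦄, Tg.Arc u v → Tg.Arc u' v' → (u, v) ≠ (u', v') →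
    ∀ e, e ∈ listArcs (pmap u v) → e ∉ listArcs (pmap u' v')
  share : ∀ ⦃u v u' v'⦄, Tg.Arc u v → Tg.Arc u' v' → (u, v) ≠ (u', v') →
    ∀ z, z ∈ pmap u v → z ∈ pmap u' v' →
      ∃ w, (w = u ∨ w = v) ∧ (w = u' ∨ w = v') ∧ vmap w = z

/-- The subgraph of the network consisting of all arcs lying on some embedding path. -/
def usedSubgraph (Tg Ng : DGraph V) (φ : EmbOn Tg Ng) : DGraph V where
  verts := {z : V | ∃ u v, Tg.Arc u v ∧ z ∈ φ.pmap u v}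
  Arc a b := ∃ u v, Tg.Arc u v ∧ IsArcOf (φ.pmap u v) a b
  arc_left := by
    rintro a b ⟨u, v, huv, harc⟩
    exact ⟨u, v, huv, isArcOf_mem_left harc⟩
  arc_right := by
    rintro a b ⟨u, v, huv, harc⟩
    exact ⟨u, v, huv, isArcOf_mem_right harc⟩

/-- A display graph: a DAG whose vertex set is covered by a tree side `VT`
and a network side `VN`, satisfying the degree conditions of the paper. -/
structure DispGraph (V : Type) extends DGraph V where
  VT : Set V
  VN : Set V
  union_eq : VT ∪ VN = verts
  finite : verts.Finite
  acyclic : ∀ v : V, ¬ Relation.TransGen Arc v v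
  tree_indeg : ∀ v : V, {u : V | Arc u v ∧ u ∈ VT ∧ v ∈ VT}.ncard ≤ 1
  indeg_le : ∀ v : V, {u : V | Arc u v}.ncard ≤ 2
  outdeg_le : ∀ v : V, {u : V | Arc v u}.ncard ≤ 2
  totdeg_le : ∀ v : V, {u : V | Arc u v}.ncard + {u : V | Arc v u}.ncard ≤ 3
  shared_out : ∀ v ∈ VT ∩ VN, ∀ u, ¬ Arc v u
  shared_in_T : ∀ v ∈ VT ∩ VN, {u : V | Arc u v ∧ u ∈ VT}.ncard ≤ 1
  shared_in_N : ∀ v ∈ VT ∩ VN, {u : V | Arc u v ∧ u ∈ VN}.ncard ≤ 1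

/-- The tree side of a display graph. -/
def DispGraph.treeSide (G : DispGraph V) : DGraph V where
  verts := G.VT
  Arc u v := G.Arc u v ∧ u ∈ G.VT ∧ v ∈ G.VT
  arc_left := by intro u v h; exact h.2.1
  arc_right := by intro u v h; exact h.2.2

/-- The network side of a display graph. -/
def DispGraph.netSide (G : DispGraph V) : DGraph V where
  verts := G.VN
  Arc u v := G.Arc u v ∧ u ∈ G.VN ∧ v ∈ G.VN
  arc_left := by intro u v h; exact h.2.1
  arc_right := by intro u v h; exact h.2.2

def DispGraph.TArc (G : DispGraph V) (u v : V) : Prop := G.treeSide.Arc u v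
def DispGraph.NArc (G : DispGraph V) (u v : V) : Prop := G.netSide.Arc u v
noncomputable def DispGraph.inDeg (G : DispGraph V) : V → ℕ := G.toDGraph.inDeg
noncomputable def DispGraph.outDeg (G : DispGraph V) : V → ℕ := G.toDGraph.outDeg

/-- An embedding function on a display graph: an embedding of its tree side into
its network side. -/
abbrev EmbFun (G : DispGraph V) := EmbOn G.treeSide G.netSide

/-- The data of a containment structure: a display graph, an embedding function on it,
and an isolabelling into vertices of the ambient display graph or labels from `Λ`. -/
structure CStruct (V Λ : Type) where
  G : DispGraph V
  emb : EmbFun G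
  ι : V → V ⊕ Λ

/-- Relabelling a containment structure by a restriction function. -/
def CStruct.relabel (g : V ⊕ Λ → V ⊕ Λ) (χ : CStruct V Λ) : CStruct V Λ :=
  ⟨χ.G, χ.emb, fun v => g (χ.ι v)⟩

/-- `ι` is an `(S,Y)`-isolabelling on the display graph of `χ`, relative to the
ambient display graph `Din`. -/
def IsIsolabelling (Din : DispGraph V) (S : Set V) (Ys : Set Λ) (χ : CStruct V Λ) : Prop :=
  (∀ u ∈ χ.G.verts, (∃ s ∈ S, χ.ι u = Sum.inl s) ∨ (∃ y ∈ Ys, χ.ι u = Sum.inr y)) ∧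
  (∀ s ∈ S, ∃ u ∈ χ.G.verts, χ.ι u = Sum.inl s) ∧
  (∀ u ∈ χ.G.verts, ∀ s ∈ S, χ.ι u = Sum.inl s →
    (s ∈ Din.VN → u ∈ χ.G.VN) ∧ (s ∈ Din.VT → u ∈ χ.G.VT)) ∧
  (∀ u ∈ χ.G.verts, ∀ v ∈ χ.G.verts, ∀ s ∈ S, χ.ι u = Sum.inl s → χ.ι v = Sum.inl s → u = v) ∧
  (∀ u ∈ χ.G.verts, ∀ v ∈ χ.G.verts, ∀ s ∈ S, ∀ t ∈ S,
    χ.ι u = Sum.inl s → χ.ι v = Sum.inl t → (χ.G.Arc u v ↔ Din.Arc s t))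

/-- `χ` is an `(S,Y)`-containment structure relative to the ambient display graph `Din`. -/
def IsCS (Din : DispGraph V) (S : Set V) (Ys : Set Λ) (χ : CStruct V Λ) : Prop :=
  IsIsolabelling Din S Ys χ ∧
  (∀ u ∈ χ.G.verts, ∀ s ∈ S, χ.ι u = Sum.inl s →
    χ.G.inDeg u = Din.inDeg s ∧ χ.G.outDeg u = Din.outDeg s) ∧
  (∀ u ∈ χ.G.VT, χ.ι u ≠ χ.ι (χ.emb.vmap u) → χ.G.outDeg u = 2)

/-- A tree arc `uv` is `y`-redundant. -/
def TArcRedundant (χ : CStruct V Λ) (y : Λ) (u v : V) : Prop :=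
  χ.G.TArc u v ∧ χ.ι u = Sum.inr y ∧ χ.ι v = Sum.inr y ∧
    ∀ z ∈ χ.emb.pmap u v, χ.ι z = Sum.inr y

/-- A network arc `ab` is `y`-redundant. -/
def NArcRedundant (χ : CStruct V Λ) (y : Λ) (a b : V) : Prop :=
  χ.G.NArc a b ∧ χ.ι a = Sum.inr y ∧ χ.ι b = Sum.inr y ∧
    ∀ u v, χ.G.TArc u v → IsArcOf (χ.emb.pmap u v) a b → TArcRedundant χ y u v

def ArcRedundant (χ : CStruct V Λ) (y : Λ) (u v : V) : Prop :=
  TArcRedundant χ y u v ∨ NArcRedundant χ y u v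

/-- A tree vertex `v` is `y`-redundant. -/
def TVertRedundant (χ : CStruct V Λ) (y : Λ) (v : V) : Prop :=
  v ∈ χ.G.VT ∧ χ.ι v = Sum.inr y ∧ χ.ι (χ.emb.vmap v) = Sum.inr y ∧
  (∀ u, χ.G.Arc u v → ArcRedundant χ y u v) ∧
  (∀ u, χ.G.Arc v u → ArcRedundant χ y v u) ∧
  (∀ u, χ.G.Arc u (χ.emb.vmap v) → ArcRedundant χ y u (χ.emb.vmap v)) ∧
  (∀ u, χ.G.Arc (χ.emb.vmap v) u → ArcRedundant χ y (χ.emb.vmap v) u)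

/-- A network vertex `v` is `y`-redundant. -/
def NVertRedundant (χ : CStruct V Λ) (y : Λ) (v : V) : Prop :=
  v ∈ χ.G.VN ∧ χ.ι v = Sum.inr y ∧
  (∀ u, χ.G.Arc u v → ArcRedundant χ y u v) ∧
  (∀ u, χ.G.Arc v u → ArcRedundant χ y v u) ∧
  (∀ w ∈ χ.G.VT, χ.emb.vmap w = v → TVertRedundant χ y w)

def VertRedundant (χ : CStruct V Λ) (y : Λ) (v : V) : Prop :=
  TVertRedundant χ y v ∨ NVertRedundant χ y v

/-- `χ'` is the `g`-restriction of `χ`: relabel by `g` and delete all redundant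
arcs and vertices; the embedding and isolabelling are restricted accordingly. -/
def IsRestrictionOf (g : V ⊕ Λ → V ⊕ Λ) (χ' χ : CStruct V Λ) : Prop :=
  χ'.G.verts = χ.G.verts \ {v : V | ∃ y, VertRedundant (χ.relabel g) y v} ∧
  (∀ u v, χ'.G.Arc u v ↔ (χ.G.Arc u v ∧ ¬ ∃ y, ArcRedundant (χ.relabel g) y u v)) ∧
  χ'.G.VT = χ.G.VT ∩ χ'.G.verts ∧
  χ'.G.VN = χ.G.VN ∩ χ'.G.verts ∧
  (∀ v ∈ χ'.G.VT, χ'.emb.vmap v = χ.emb.vmap v) ∧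
  (∀ u v, χ'.G.TArc u v → χ'.emb.pmap u v = χ.emb.pmap u v) ∧
  (∀ v ∈ χ'.G.verts, χ'.ι v = g (χ.ι v))

/-- `g : S ∪ Y → S' ∪ Y` is a restriction function: identity on `S'`, mapping the rest
of `S` into `Y`, and mapping `Y` into `Y`. -/
def IsRestrictionFun (S S' : Set V) (Ys : Set Λ) (g : V ⊕ Λ → V ⊕ Λ) : Prop :=
  (∀ v ∈ S', g (Sum.inl v) = Sum.inl v) ∧
  (∀ v ∈ S, v ∉ S' → ∃ y ∈ Ys, g (Sum.inl v) = Sum.inr y) ∧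
  (∀ y ∈ Ys, ∃ y' ∈ Ys, g (Sum.inr y) = Sum.inr y')

/-- A well-behaved containment structure. -/
def WellBehaved (Din : DispGraph V) (Ys : Set Λ) (χ : CStruct V Λ) : Prop :=
  (∀ u v, χ.G.Arc u v → ¬ ∃ y ∈ Ys, ArcRedundant χ y u v) ∧
  (∀ v ∈ χ.G.verts, ¬ ∃ y ∈ Ys, VertRedundant χ y v) ∧
  (∀ u v, χ.G.Arc u v → ∀ y ∈ Ys, ∀ y' ∈ Ys,
    χ.ι u = Sum.inr y → χ.ι v = Sum.inr y' → y = y') ∧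
  (∀ u ∈ χ.G.verts, ∀ v ∈ χ.G.verts, ∀ s t : V, χ.ι u = Sum.inl s → χ.ι v = Sum.inl t →
    Relation.ReflTransGen χ.G.Arc u v → Relation.ReflTransGen Din.Arc s t)

/-- The labels used for signatures and reconciliations. -/
inductive Lab : Type where
  | past | future | left | right
deriving DecidableEq

/-- The restriction function sending every vertex of `P` to the label `y`. -/
noncomputable def sendVerts (P : Set V) (y : Lab) : V ⊕ Lab → V ⊕ Lab
  | Sum.inl v => if v ∈ P then Sum.inr y else Sum.inl v
  | Sum.inr y' => Sum.inr y'

/-- The restriction function sending `A` to label `a` and `B` to label `b`. -/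
noncomputable def sendVerts2 (A : Set V) (a : Lab) (B : Set V) (b : Lab) :
    V ⊕ Lab → V ⊕ Lab
  | Sum.inl v => if v ∈ A then Sum.inr a else if v ∈ B then Sum.inr b else Sum.inl v
  | Sum.inr y => Sum.inr y

/-- The restriction function merging all labels in `A` into the label `y`. -/
noncomputable def sendLabs (A : Set Lab) (y : Lab) : V ⊕ Lab → V ⊕ Lab
  | Sum.inl v => Sum.inl v
  | Sum.inr y' => if y' ∈ A then Sum.inr y else Sum.inr y'

/-- The restriction function sending label `a` to `ya` and label `b` to `yb`. -/
def sendTwoLabs (a ya b yb : Lab) : V ⊕ Lab → V ⊕ Lab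
  | Sum.inl v => Sum.inl v
  | Sum.inr y => if y = a then Sum.inr ya else if y = b then Sum.inr yb else Sum.inr y

/-- `(P,S,F)` is a bag of a tree decomposition of `Din`: a partition of the vertices
with `S` separating `P` from `F`. -/
def IsBag (Din : DispGraph V) (P S F : Set V) : Prop :=
  P ∪ S ∪ F = Din.verts ∧ Disjoint P S ∧ Disjoint P F ∧ Disjoint S F ∧
  ∀ u v, (Din.Arc u v ∨ Din.Arc v u) → u ∈ P → v ∈ F → False

def pfLabs : Set Lab := {Lab.past, Lab.future}
def lrfLabs : Set Lab := {Lab.left, Lab.right, Lab.future}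

/-- A signature for a bag with present `S` is an `(S,{past,future})`-containment structure. -/
def IsSignature (Din : DispGraph V) (S : Set V) (σ : CStruct V Lab) : Prop :=
  IsCS Din S pfLabs σ

/-- An `F`-partial solution for a bag `(P,S,F)` is a `(P∪S,{future})`-containment structure. -/
def IsPartialSolution (Din : DispGraph V) (P S : Set V) (ψ : CStruct V Lab) : Prop :=
  IsCS Din (P ∪ S) ({Lab.future} : Set Lab) ψ

/-- A (well-behaved) signature is valid for the bag `(P,S,F)` if it is the
`(P→past)`-restriction of a well-behaved `F`-partial solution. -/
def ValidSig (Din : DispGraph V) (P S F : Set V) (σ : CStruct V Lab) : Prop :=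
  ∃ ψ : CStruct V Lab, IsPartialSolution Din P S ψ ∧
    WellBehaved Din ({Lab.future} : Set Lab) ψ ∧
    IsRestrictionOf (sendVerts P Lab.past) σ ψ

/-- A reconciliation for a Join bag with present `S` is an
`(S,{left,right,future})`-containment structure. -/
def IsReconciliation (Din : DispGraph V) (S : Set V) (μ : CStruct V Lab) : Prop :=
  IsCS Din S lrfLabs μ

/-- A reconciliation is valid for the Join bag `(L∪R,S,F)` if it is the
`(L→left, R→right)`-restriction of a well-behaved `F`-partial solution. -/
def ValidRecon (Din : DispGraph V) (L R S F : Set V) (μ : CStruct V Lab) : Prop :=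
  ∃ ψ : CStruct V Lab, IsCS Din (L ∪ R ∪ S) ({Lab.future} : Set Lab) ψ ∧
    WellBehaved Din ({Lab.future} : Set Lab) ψ ∧
    IsRestrictionOf (sendVerts2 L Lab.left R Lab.right) μ ψ

/-- `z` is an internal vertex of the replacement path `Pm u v`. -/
def internalOf (Pm : V → V → List V) (u v z : V) : Prop :=
  z ∈ Pm u v ∧ z ≠ u ∧ z ≠ v

/-- `σ₀` is a subdivision of the containment structure `σ`, with each network
arc `uv` of `σ` replaced by the path `Pm u v`. -/
def IsSubdivisionOfCS (σ₀ σ : CStruct V Λ) (Pm : V → V → List V) : Prop :=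
  σ₀.G.VT = σ.G.VT ∧
  (∀ u v, σ₀.G.TArc u v ↔ σ.G.TArc u v) ∧
  σ.G.VN ⊆ σ₀.G.VN ∧
  σ₀.G.verts = σ.G.verts ∪ {z : V | ∃ u v, σ.G.NArc u v ∧ z ∈ Pm u v} ∧
  (∀ u v, σ.G.NArc u v → DipathFrom σ₀.G.NArc u v (Pm u v) ∧ 2 ≤ (Pm u v).length) ∧
  (∀ u v, σ.G.NArc u v → 2 < (Pm u v).length →
    ∃ y : Λ, σ.ι u = Sum.inr y ∧ σ.ι v = Sum.inr y) ∧
  (∀ u v, σ.G.NArc u v → ∀ z, internalOf Pm u v z →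
    z ∉ σ.G.verts ∧ z ∈ σ₀.G.VN ∧ σ₀.ι z = σ.ι u) ∧
  (∀ u v u' v', σ.G.NArc u v → σ.G.NArc u' v' → (u, v) ≠ (u', v') →
    ∀ z, internalOf Pm u v z → ¬ internalOf Pm u' v' z) ∧
  (∀ a b, σ₀.G.NArc a b ↔ ∃ u v, σ.G.NArc u v ∧ IsArcOf (Pm u v) a b) ∧
  (∀ v ∈ σ.G.verts, σ₀.ι v = σ.ι v) ∧
  (∀ v ∈ σ.G.VT, σ₀.emb.vmap v = σ.emb.vmap v) ∧
  (∀ u v, σ.G.TArc u v →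
    (σ₀.emb.pmap u v).head? = (σ.emb.pmap u v).head? ∧
    (σ₀.emb.pmap u v).getLast? = (σ.emb.pmap u v).getLast? ∧
    ∀ a b, IsArcOf (σ₀.emb.pmap u v) a b ↔
      ∃ c d, IsArcOf (σ.emb.pmap u v) c d ∧ IsArcOf (Pm c d) a b)

/-- `χ` has a long `y`-path: a suppressible degree-(1,1) network vertex between two
network arcs, all three vertices labelled `y`, with no tree vertex embedded into it. -/
def LongYPath (χ : CStruct V Λ) (y : Λ) : Prop :=
  ∃ x₁ x₂ x₃ : V, χ.G.NArc x₁ x₂ ∧ χ.G.NArc x₂ x₃ ∧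
    {u : V | χ.G.NArc u x₂}.ncard = 1 ∧ {u : V | χ.G.NArc x₂ u}.ncard = 1 ∧
    χ.ι x₁ = Sum.inr y ∧ χ.ι x₂ = Sum.inr y ∧ χ.ι x₃ = Sum.inr y ∧
    ∀ w ∈ χ.G.VT, χ.emb.vmap w ≠ x₂

def IsCompact (χ : CStruct V Λ) : Prop := ∀ y : Λ, ¬ LongYPath χ y

/-- `σ` is the compact form of `σ₀`: `σ` is compact and `σ₀` is a subdivision of `σ`. -/
def IsCompactFormOf (σ σ₀ : CStruct V Λ) : Prop :=
  IsCompact σ ∧ ∃ Pm : V → V → List V, IsSubdivisionOfCS σ₀ σ Pm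

/-- Isomorphism of containment structures. -/
def CSIso (χ χ' : CStruct V Λ) : Prop :=
  ∃ f : V → V, Set.BijOn f χ.G.verts χ'.G.verts ∧
    (∀ v ∈ χ.G.verts, (v ∈ χ.G.VT ↔ f v ∈ χ'.G.VT)) ∧
    (∀ v ∈ χ.G.verts, (v ∈ χ.G.VN ↔ f v ∈ χ'.G.VN)) ∧
    (∀ u ∈ χ.G.verts, ∀ v ∈ χ.G.verts, (χ.G.Arc u v ↔ χ'.G.Arc (f u) (f v))) ∧
    (∀ v ∈ χ.G.verts, χ'.ι (f v) = χ.ι v) ∧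
    (∀ v ∈ χ.G.VT, χ'.emb.vmap (f v) = f (χ.emb.vmap v)) ∧
    (∀ u v, χ.G.TArc u v → χ'.emb.pmap (f u) (f v) = (χ.emb.pmap u v).map f)

lemma head_or_pred {A : V → V → Prop} :
    ∀ {p : List V}, p.Chain' A → ∀ z ∈ p, p.head? = some z ∨ ∃ w, A w z := by
  intro p
  induction p with
  | nil => simp
  | cons a l ih =>
    intro hc z hz
    rcases List.mem_cons.mp hz with rfl | hz'
    · exact Or.inl rfl
    · rcases ih hc.tail z hz' with hh | hw
      · exact Or.inr ⟨a, (List.isChain_cons.mp hc).1 z hh⟩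
      · exact Or.inr hw

/-- Restrictions of containment structures compose transitively. -/
theorem restriction_trans {V Λ : Type} (Din : DispGraph V) (S S' S'' : Set V) (Ys : Set Λ)
    (hS' : S' ⊆ S) (hS'' : S'' ⊆ S')
    (g' g'' : V ⊕ Λ → V ⊕ Λ)
    (hg' : IsRestrictionFun S S' Ys g') (hg'' : IsRestrictionFun S' S'' Ys g'')
    (χ χ' χ'' : CStruct V Λ) (hχ : IsCS Din S Ys χ)
    (h1 : IsRestrictionOf g' χ' χ) (h2 : IsRestrictionOf g'' χ'' χ') :
    IsRestrictionOf (g'' ∘ g') χ'' χ := by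
  obtain ⟨h1v, h1a, h1T, h1N, h1vm, h1pm, h1ι⟩ := h1
  obtain ⟨h2v, h2a, h2T, h2N, h2vm, h2pm, h2ι⟩ := h2
  have hVT : χ.G.VT ⊆ χ.G.verts := χ.G.union_eq ▸ Set.subset_union_left
  have hVN : χ.G.VN ⊆ χ.G.verts := χ.G.union_eq ▸ Set.subset_union_right
  have hVT' : χ'.G.VT ⊆ χ'.G.verts := χ'.G.union_eq ▸ Set.subset_union_left
  have hVN' : χ'.G.VN ⊆ χ'.G.verts := χ'.G.union_eq ▸ Set.subset_union_right
  have hsub2 : χ''.G.verts ⊆ χ'.G.verts := by rw [h2v]; exact Set.diff_subset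
  -- labels of vertices after applying g' are in Ys
  have labmem : ∀ u ∈ χ.G.verts, ∀ y : Λ, g' (χ.ι u) = Sum.inr y → y ∈ Ys := by
    intro u hu y hy
    rcases hχ.1.1 u hu with ⟨s, hs, he⟩ | ⟨y₀, hy₀, he⟩
    · rw [he] at hy
      by_cases hs' : s ∈ S'
      · rw [hg'.1 s hs'] at hy; exact absurd hy (by simp)
      · obtain ⟨y', hy', he'⟩ := hg'.2.1 s hs hs'
        rw [he'] at hy
        obtain rfl := Sum.inr.inj hy
        exact hy'
    · rw [he] at hy
      obtain ⟨y', hy', he'⟩ := hg'.2.2 y₀ hy₀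
      rw [he'] at hy
      obtain rfl := Sum.inr.inj hy
      exact hy'
  have g2 : ∀ y ∈ Ys, ∃ y₂, g'' (Sum.inr y) = Sum.inr y₂ := by
    intro y hy; obtain ⟨y', _, he⟩ := hg''.2.2 y hy; exact ⟨y', he⟩
  have step : ∀ {y y₂ : Λ} {x : V ⊕ Λ}, g' x = Sum.inr y → g'' (Sum.inr y) = Sum.inr y₂ →
      g'' (g' x) = Sum.inr y₂ := by intro y y₂ x h1 h2; rw [h1, h2]
  -- label agreement on surviving vertices
  have trans2 : ∀ z ∈ χ'.G.verts, g'' (χ'.ι z) = g'' (g' (χ.ι z)) := by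
    intro z hz; rw [h1ι z hz]
  -- vertices of embedding paths of χ' lie in χ'.G.VN
  have pathVN : ∀ u v, χ'.G.TArc u v → ∀ z ∈ χ'.emb.pmap u v, z ∈ χ'.G.VN := by
    intro u v ht z hz
    obtain ⟨hch, -, hhd, -⟩ := χ'.emb.path_spec ht
    rcases head_or_pred hch z hz with hh | ⟨w, hw⟩
    · obtain rfl := Option.some.inj (hhd.symm.trans hh)
      exact χ'.emb.vmap_mem u ht.2.1
    · exact hw.2.2
  ------------------------------------------------------------------
  -- Claim 1: stage-1 redundancy lifts to root redundancy
  ------------------------------------------------------------------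
  have C1T : ∀ y y₂ u v, g'' (Sum.inr y) = Sum.inr y₂ → TArcRedundant (χ.relabel g') y u v →
      TArcRedundant (χ.relabel (g'' ∘ g')) y₂ u v := by
    rintro y y₂ u v hg ⟨ht, hu, hv2, hp⟩
    exact ⟨ht, step hu hg, step hv2 hg, fun z hz => step (hp z hz) hg⟩
  have C1N : ∀ y y₂ a b, g'' (Sum.inr y) = Sum.inr y₂ → NArcRedundant (χ.relabel g') y a b →
      NArcRedundant (χ.relabel (g'' ∘ g')) y₂ a b := by
    rintro y y₂ a b hg ⟨hn, ha2, hb2, hcov⟩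
    exact ⟨hn, step ha2 hg, step hb2 hg, fun u v ht hi => C1T y y₂ u v hg (hcov u v ht hi)⟩
  have C1A : ∀ y y₂ a b, g'' (Sum.inr y) = Sum.inr y₂ → ArcRedundant (χ.relabel g') y a b →
      ArcRedundant (χ.relabel (g'' ∘ g')) y₂ a b := by
    rintro y y₂ a b hg (h | h)
    · exact Or.inl (C1T y y₂ a b hg h)
    · exact Or.inr (C1N y y₂ a b hg h)
  have C1TV : ∀ y y₂ v, g'' (Sum.inr y) = Sum.inr y₂ → TVertRedundant (χ.relabel g') y v →
      TVertRedundant (χ.relabel (g'' ∘ g')) y₂ v := by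
    rintro y y₂ v hg ⟨hv1, hl, hlm, hb1, hb2, hb3, hb4⟩
    exact ⟨hv1, step hl hg, step hlm hg,
      fun u h => C1A y y₂ u v hg (hb1 u h),
      fun u h => C1A y y₂ v u hg (hb2 u h),
      fun u h => C1A y y₂ u _ hg (hb3 u h),
      fun u h => C1A y y₂ _ u hg (hb4 u h)⟩
  have C1NV : ∀ y y₂ v, g'' (Sum.inr y) = Sum.inr y₂ → NVertRedundant (χ.relabel g') y v →
      NVertRedundant (χ.relabel (g'' ∘ g')) y₂ v := by
    rintro y y₂ v hg ⟨hv1, hl, hb1, hb2, hbW⟩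
    exact ⟨hv1, step hl hg,
      fun u h => C1A y y₂ u v hg (hb1 u h),
      fun u h => C1A y y₂ v u hg (hb2 u h),
      fun w hw hmw => C1TV y y₂ w hg (hbW w hw hmw)⟩
  have labArc : ∀ y u v, ArcRedundant (χ.relabel g') y u v → y ∈ Ys := by
    rintro y u v (⟨ht, hu, -, -⟩ | ⟨hn, hu, -, -⟩)
    · exact labmem u (hVT ht.2.1) y hu
    · exact labmem u (hVN hn.2.1) y hu
  have labVert : ∀ y v, VertRedundant (χ.relabel g') y v → y ∈ Ys := by
    rintro y v (⟨hv1, hl, -⟩ | ⟨hv1, hl, -⟩)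
    · exact labmem v (hVT hv1) y hl
    · exact labmem v (hVN hv1) y hl
  have C1A' : ∀ y a b, ArcRedundant (χ.relabel g') y a b →
      ∃ y₂, ArcRedundant (χ.relabel (g'' ∘ g')) y₂ a b := by
    intro y a b h
    obtain ⟨y₂, hg⟩ := g2 y (labArc y a b h)
    exact ⟨y₂, C1A y y₂ a b hg h⟩
  have C1V' : ∀ y v, VertRedundant (χ.relabel g') y v →
      ∃ y₂, VertRedundant (χ.relabel (g'' ∘ g')) y₂ v := by
    rintro y v h
    obtain ⟨y₂, hg⟩ := g2 y (labVert y v h)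
    rcases h with h | h
    · exact ⟨y₂, Or.inl (C1TV y y₂ v hg h)⟩
    · exact ⟨y₂, Or.inr (C1NV y y₂ v hg h)⟩
  ------------------------------------------------------------------
  -- D1: stage-2 redundancy lifts to root redundancy (same label)
  ------------------------------------------------------------------
  have D1T : ∀ y u v, TArcRedundant (χ'.relabel g'') y u v →
      TArcRedundant (χ.relabel (g'' ∘ g')) y u v := by
    rintro y u v ⟨ht, hu, hv2, hp⟩
    have hu' : u ∈ χ'.G.verts := hVT' ht.2.1
    have hv' : v ∈ χ'.G.verts := hVT' ht.2.2
    have huT : u ∈ χ.G.VT := by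
      have h : u ∈ χ'.G.VT := ht.2.1; rw [h1T] at h; exact h.1
    have hvT : v ∈ χ.G.VT := by
      have h : v ∈ χ'.G.VT := ht.2.2; rw [h1T] at h; exact h.1
    refine ⟨⟨((h1a u v).mp ht.1).1, huT, hvT⟩,
      (trans2 u hu').symm.trans hu, (trans2 v hv').symm.trans hv2, ?_⟩
    intro z hz
    have hz' : z ∈ χ'.emb.pmap u v := by
      have hq := h1pm u v ht; exact hq ▸ hz
    exact (trans2 z (hVN' (pathVN u v ht z hz'))).symm.trans (hp z hz')
  have D1N : ∀ y a b, NArcRedundant (χ'.relabel g'') y a b →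
      NArcRedundant (χ.relabel (g'' ∘ g')) y a b := by
    rintro y a b ⟨hn, ha2, hb2, hcov⟩
    have ha' : a ∈ χ'.G.verts := hVN' hn.2.1
    have hb' : b ∈ χ'.G.verts := hVN' hn.2.2
    have haN : a ∈ χ.G.VN := by
      have h : a ∈ χ'.G.VN := hn.2.1; rw [h1N] at h; exact h.1
    have hbN : b ∈ χ.G.VN := by
      have h : b ∈ χ'.G.VN := hn.2.2; rw [h1N] at h; exact h.1
    refine ⟨⟨((h1a a b).mp hn.1).1, haN, hbN⟩,
      (trans2 a ha').symm.trans ha2, (trans2 b hb').symm.trans hb2, ?_⟩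
    intro u v ht hi
    by_cases hA : χ'.G.Arc u v
    · have ht' : χ'.G.TArc u v :=
        ⟨hA, by rw [h1T]; exact ⟨ht.2.1, χ'.G.arc_left hA⟩,
          by rw [h1T]; exact ⟨ht.2.2, χ'.G.arc_right hA⟩⟩
      refine D1T y u v (hcov u v ht' ?_)
      show IsArcOf (χ'.emb.pmap u v) a b
      rw [h1pm u v ht']
      exact hi
    · have hAr : ∃ y', ArcRedundant (χ.relabel g') y' u v := by
        by_contra hno; exact hA ((h1a u v).mpr ⟨ht.1, hno⟩)
      obtain ⟨y', hy'⟩ := hAr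
      have hT' : TArcRedundant (χ.relabel g') y' u v := by
        rcases hy' with h | h
        · exact h
        · exact absurd ht.1 (χ.G.shared_out u ⟨ht.2.1, h.1.2.1⟩ v)
      obtain ⟨y₂, hgy₂⟩ := g2 y' (labmem u (hVT ht.2.1) y' hT'.2.1)
      have hroot := C1T y' y₂ u v hgy₂ hT'
      have hl1 : g'' (g' (χ.ι a)) = Sum.inr y₂ := hroot.2.2.2 a (isArcOf_mem_left hi)
      have hl2 : g'' (g' (χ.ι a)) = Sum.inr y := (trans2 a ha').symm.trans ha2
      obtain rfl := Sum.inr.inj (hl1.symm.trans hl2)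
      exact hroot
  have D1A : ∀ y a b, ArcRedundant (χ'.relabel g'') y a b →
      ArcRedundant (χ.relabel (g'' ∘ g')) y a b := by
    rintro y a b (h | h)
    · exact Or.inl (D1T y a b h)
    · exact Or.inr (D1N y a b h)
  -- a deleted arc incident to a vertex with root label y is root y-redundant
  have delArc : ∀ y a b, χ.G.Arc a b → ¬ χ'.G.Arc a b →
      (g'' (g' (χ.ι a)) = Sum.inr y ∨ g'' (g' (χ.ι b)) = Sum.inr y) →
      ArcRedundant (χ.relabel (g'' ∘ g')) y a b := by
    intro y a b hab hnab hlab
    have hAr : ∃ y', ArcRedundant (χ.relabel g') y' a b := by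
      by_contra hno; exact hnab ((h1a a b).mpr ⟨hab, hno⟩)
    obtain ⟨y', h'⟩ := hAr
    obtain ⟨y₂, hg2⟩ := g2 y' (labArc y' a b h')
    have hroot := C1A y' y₂ a b hg2 h'
    have hla : g'' (g' (χ.ι a)) = Sum.inr y₂ ∧ g'' (g' (χ.ι b)) = Sum.inr y₂ := by
      rcases hroot with ⟨-, hx1, hx2, -⟩ | ⟨-, hx1, hx2, -⟩ <;> exact ⟨hx1, hx2⟩
    have hyy : y₂ = y := by
      rcases hlab with h | h
      · exact Sum.inr.inj (hla.1.symm.trans h)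
      · exact Sum.inr.inj (hla.2.symm.trans h)
    exact hyy ▸ hroot
  have D1arcAt : ∀ y a b, χ.G.Arc a b →
      (χ'.G.Arc a b → ArcRedundant (χ'.relabel g'') y a b) →
      (g'' (g' (χ.ι a)) = Sum.inr y ∨ g'' (g' (χ.ι b)) = Sum.inr y) →
      ArcRedundant (χ.relabel (g'' ∘ g')) y a b := by
    intro y a b hab hsurv hlab
    by_cases h : χ'.G.Arc a b
    · exact D1A y a b (hsurv h)
    · exact delArc y a b hab h hlab
  have D1TV : ∀ y v, TVertRedundant (χ'.relabel g'') y v →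
      TVertRedundant (χ.relabel (g'' ∘ g')) y v := by
    rintro y v ⟨hv1, hl, hlm, hb1, hb2, hb3, hb4⟩
    have hvv : v ∈ χ'.G.verts := hVT' hv1
    have hvm_eq : χ'.emb.vmap v = χ.emb.vmap v := h1vm v hv1
    have hm : χ.emb.vmap v ∈ χ'.G.verts := by
      rw [← hvm_eq]; exact hVN' (χ'.emb.vmap_mem v hv1)
    have hlabv : g'' (g' (χ.ι v)) = Sum.inr y := (trans2 v hvv).symm.trans hl
    have hlm' : g'' (g' (χ.ι (χ.emb.vmap v))) = Sum.inr y := by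
      have hq : g'' (χ'.ι (χ'.emb.vmap v)) = Sum.inr y := hlm
      rw [hvm_eq] at hq
      exact (trans2 _ hm).symm.trans hq
    have hvT : v ∈ χ.G.VT := by
      have h : v ∈ χ'.G.VT := hv1; rw [h1T] at h; exact h.1
    refine ⟨hvT, hlabv, hlm', ?_, ?_, ?_, ?_⟩
    · intro u hu; exact D1arcAt y u v hu (hb1 u) (Or.inr hlabv)
    · intro u hu; exact D1arcAt y v u hu (hb2 u) (Or.inl hlabv)
    · intro u hu
      refine D1arcAt y u (χ.emb.vmap v) hu (fun h => ?_) (Or.inr hlm')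
      rw [← hvm_eq] at h
      have hq : ArcRedundant (χ'.relabel g'') y u (χ'.emb.vmap v) := hb3 u h
      rwa [hvm_eq] at hq
    · intro u hu
      refine D1arcAt y (χ.emb.vmap v) u hu (fun h => ?_) (Or.inl hlm')
      rw [← hvm_eq] at h
      have hq : ArcRedundant (χ'.relabel g'') y (χ'.emb.vmap v) u := hb4 u h
      rwa [hvm_eq] at hq
  have D1NV : ∀ y v, NVertRedundant (χ'.relabel g'') y v →
      NVertRedundant (χ.relabel (g'' ∘ g')) y v := by
    rintro y v ⟨hv1, hl, hb1, hb2, hbW⟩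
    have hvv : v ∈ χ'.G.verts := hVN' hv1
    have hlabv : g'' (g' (χ.ι v)) = Sum.inr y := (trans2 v hvv).symm.trans hl
    have hvN : v ∈ χ.G.VN := by
      have h : v ∈ χ'.G.VN := hv1; rw [h1N] at h; exact h.1
    refine ⟨hvN, hlabv, fun u hu => D1arcAt y u v hu (hb1 u) (Or.inr hlabv),
      fun u hu => D1arcAt y v u hu (hb2 u) (Or.inl hlabv), ?_⟩
    intro w hw hmw
    by_cases hws : w ∈ χ'.G.verts
    · have hw' : w ∈ χ'.G.VT := by rw [h1T]; exact ⟨hw, hws⟩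
      refine D1TV y w (hbW w hw' ?_)
      show χ'.emb.vmap w = v
      rw [h1vm w hw']
      exact hmw
    · have hEx : ∃ y', VertRedundant (χ.relabel g') y' w := by
        by_contra hno
        exact hws (by rw [h1v]; exact ⟨hVT hw, hno⟩)
      obtain ⟨y', hred⟩ := hEx
      have hTred : TVertRedundant (χ.relabel g') y' w := by
        rcases hred with h | h
        · exact h
        · exfalso
          have hfix : χ.emb.vmap w = w := χ.emb.fixes w ⟨hw, h.1⟩
          have hwv : w = v := hfix.symm.trans hmw
          exact hws (hwv ▸ hvv)
      obtain ⟨y₂, hg2y⟩ := g2 y' (labmem w (hVT hw) y' hTred.2.1)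
      have hroot := C1TV y' y₂ w hg2y hTred
      have hl1 : g'' (g' (χ.ι (χ.emb.vmap w))) = Sum.inr y₂ := hroot.2.2.1
      rw [show χ.emb.vmap w = v from hmw] at hl1
      obtain rfl := Sum.inr.inj (hl1.symm.trans hlabv)
      exact hroot
  have D1V : ∀ y v, VertRedundant (χ'.relabel g'') y v →
      VertRedundant (χ.relabel (g'' ∘ g')) y v := by
    rintro y v (h | h)
    · exact Or.inl (D1TV y v h)
    · exact Or.inr (D1NV y v h)
  ------------------------------------------------------------------
  -- D2: root redundancy of surviving objects gives stage-2 redundancy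
  ------------------------------------------------------------------
  have D2T : ∀ y u v, χ'.G.Arc u v → TArcRedundant (χ.relabel (g'' ∘ g')) y u v →
      TArcRedundant (χ'.relabel g'') y u v := by
    rintro y u v hA ⟨ht, hu, hv2, hp⟩
    have huT : u ∈ χ.G.VT := ht.2.1
    have hvT : v ∈ χ.G.VT := ht.2.2
    have ht' : χ'.G.TArc u v :=
      ⟨hA, by rw [h1T]; exact ⟨huT, χ'.G.arc_left hA⟩,
        by rw [h1T]; exact ⟨hvT, χ'.G.arc_right hA⟩⟩
    refine ⟨ht', (trans2 u (hVT' ht'.2.1)).trans hu, (trans2 v (hVT' ht'.2.2)).trans hv2, ?_⟩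
    intro z hz
    have hz0 : z ∈ χ'.emb.pmap u v := hz
    have hz' : z ∈ χ.emb.pmap u v := by rw [← h1pm u v ht']; exact hz0
    exact (trans2 z (hVN' (pathVN u v ht' z hz0))).trans (hp z hz')
  have D2N : ∀ y a b, χ'.G.Arc a b → NArcRedundant (χ.relabel (g'' ∘ g')) y a b →
      NArcRedundant (χ'.relabel g'') y a b := by
    rintro y a b hA ⟨hn, ha2, hb2, hcov⟩
    have haN : a ∈ χ.G.VN := hn.2.1
    have hbN : b ∈ χ.G.VN := hn.2.2
    have hn' : χ'.G.NArc a b :=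
      ⟨hA, by rw [h1N]; exact ⟨haN, χ'.G.arc_left hA⟩,
        by rw [h1N]; exact ⟨hbN, χ'.G.arc_right hA⟩⟩
    refine ⟨hn', (trans2 a (hVN' hn'.2.1)).trans ha2, (trans2 b (hVN' hn'.2.2)).trans hb2, ?_⟩
    intro u v ht' hi
    have ht'c : χ'.G.TArc u v := ht'
    have hic : IsArcOf (χ'.emb.pmap u v) a b := hi
    have huT : u ∈ χ.G.VT := by
      have h : u ∈ χ'.G.VT := ht'c.2.1; rw [h1T] at h; exact h.1
    have hvT : v ∈ χ.G.VT := by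
      have h : v ∈ χ'.G.VT := ht'c.2.2; rw [h1T] at h; exact h.1
    have htχ : χ.G.TArc u v := ⟨((h1a u v).mp ht'c.1).1, huT, hvT⟩
    exact D2T y u v ht'c.1 (hcov u v htχ (by
      show IsArcOf (χ.emb.pmap u v) a b
      rw [← h1pm u v ht'c]; exact hic))
  have D2A : ∀ y a b, χ'.G.Arc a b → ArcRedundant (χ.relabel (g'' ∘ g')) y a b →
      ArcRedundant (χ'.relabel g'') y a b := by
    rintro y a b hA (h | h)
    · exact Or.inl (D2T y a b hA h)
    · exact Or.inr (D2N y a b hA h)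
  have D2TV : ∀ y v, v ∈ χ'.G.verts → TVertRedundant (χ.relabel (g'' ∘ g')) y v →
      TVertRedundant (χ'.relabel g'') y v := by
    rintro y v hvv ⟨hv1, hl, hlm, hb1, hb2, hb3, hb4⟩
    have hv1c : v ∈ χ.G.VT := hv1
    have hv1' : v ∈ χ'.G.VT := by rw [h1T]; exact ⟨hv1c, hvv⟩
    have hvm_eq : χ'.emb.vmap v = χ.emb.vmap v := h1vm v hv1'
    have hmv : χ'.emb.vmap v ∈ χ'.G.verts := hVN' (χ'.emb.vmap_mem v hv1')
    refine ⟨hv1', (trans2 v hvv).trans hl, ?_, ?_, ?_, ?_, ?_⟩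
    · show g'' (χ'.ι (χ'.emb.vmap v)) = Sum.inr y
      have hlmc : g'' (g' (χ.ι (χ.emb.vmap v))) = Sum.inr y := hlm
      refine (trans2 _ hmv).trans ?_
      rw [hvm_eq]
      exact hlmc
    · intro u hu
      exact D2A y u v hu (hb1 u ((h1a u v).mp hu).1)
    · intro u hu
      exact D2A y v u hu (hb2 u ((h1a v u).mp hu).1)
    · intro u hu
      have hu0 : χ'.G.Arc u (χ'.emb.vmap v) := hu
      have hu' : χ'.G.Arc u (χ.emb.vmap v) := by rwa [hvm_eq] at hu0
      have hq := D2A y u (χ.emb.vmap v) hu' (hb3 u ((h1a u _).mp hu').1)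
      show ArcRedundant (χ'.relabel g'') y u (χ'.emb.vmap v)
      rwa [← hvm_eq] at hq
    · intro u hu
      have hu0 : χ'.G.Arc (χ'.emb.vmap v) u := hu
      have hu' : χ'.G.Arc (χ.emb.vmap v) u := by rwa [hvm_eq] at hu0
      have hq := D2A y (χ.emb.vmap v) u hu' (hb4 u ((h1a _ u).mp hu').1)
      show ArcRedundant (χ'.relabel g'') y (χ'.emb.vmap v) u
      rwa [← hvm_eq] at hq
  have D2NV : ∀ y v, v ∈ χ'.G.verts → NVertRedundant (χ.relabel (g'' ∘ g')) y v →
      NVertRedundant (χ'.relabel g'') y v := by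
    rintro y v hvv ⟨hv1, hl, hb1, hb2, hbW⟩
    have hv1c : v ∈ χ.G.VN := hv1
    refine ⟨by show v ∈ χ'.G.VN; rw [h1N]; exact ⟨hv1c, hvv⟩, (trans2 v hvv).trans hl,
      fun u hu => D2A y u v hu (hb1 u ((h1a u v).mp hu).1),
      fun u hu => D2A y v u hu (hb2 u ((h1a v u).mp hu).1), ?_⟩
    intro w hw' hmw
    have hw'c : w ∈ χ'.G.VT := hw'
    have hmwc : χ'.emb.vmap w = v := hmw
    have hw : w ∈ χ.G.VT := by
      have h := hw'c; rw [h1T] at h; exact h.1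
    exact D2TV y w (hVT' hw'c) (hbW w hw (by
      show χ.emb.vmap w = v
      rw [← h1vm w hw'c]; exact hmwc))
  have D2V : ∀ y v, v ∈ χ'.G.verts → VertRedundant (χ.relabel (g'' ∘ g')) y v →
      VertRedundant (χ'.relabel g'') y v := by
    rintro y v hvv (h | h)
    · exact Or.inl (D2TV y v hvv h)
    · exact Or.inr (D2NV y v hvv h)
  ------------------------------------------------------------------
  -- assemble the seven conditions
  ------------------------------------------------------------------
  refine ⟨?_, ?_, ?_, ?_, ?_, ?_, ?_⟩
  · -- vertex sets
    rw [h2v, h1v]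
    ext v
    simp only [Set.mem_diff, Set.mem_setOf_eq]
    constructor
    · rintro ⟨⟨hvχ, hn1⟩, hn2⟩
      refine ⟨hvχ, ?_⟩
      rintro ⟨y, hy⟩
      have hv' : v ∈ χ'.G.verts := by rw [h1v]; exact ⟨hvχ, hn1⟩
      exact hn2 ⟨y, D2V y v hv' hy⟩
    · rintro ⟨hvχ, hn⟩
      refine ⟨⟨hvχ, ?_⟩, ?_⟩
      · rintro ⟨y, hy⟩
        obtain ⟨y₂, h⟩ := C1V' y v hy
        exact hn ⟨y₂, h⟩
      · rintro ⟨y, hy⟩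
        exact hn ⟨y, D1V y v hy⟩
  · -- arcs
    intro u v
    rw [h2a u v, h1a u v]
    constructor
    · rintro ⟨⟨hA, hn1⟩, hn2⟩
      refine ⟨hA, ?_⟩
      rintro ⟨y, hy⟩
      have hA' : χ'.G.Arc u v := (h1a u v).mpr ⟨hA, hn1⟩
      exact hn2 ⟨y, D2A y u v hA' hy⟩
    · rintro ⟨hA, hn⟩
      refine ⟨⟨hA, ?_⟩, ?_⟩
      · rintro ⟨y, hy⟩
        obtain ⟨y₂, h⟩ := C1A' y u v hy
        exact hn ⟨y₂, h⟩
      · rintro ⟨y, hy⟩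
        exact hn ⟨y, D1A y u v hy⟩
  · rw [h2T, h1T, Set.inter_assoc, Set.inter_eq_right.mpr hsub2]
  · rw [h2N, h1N, Set.inter_assoc, Set.inter_eq_right.mpr hsub2]
  · intro v hv
    have hv' : v ∈ χ'.G.VT := by have := hv; rw [h2T] at this; exact this.1
    exact (h2vm v hv).trans (h1vm v hv')
  · intro u v ht
    have hA' : χ'.G.Arc u v := ((h2a u v).mp ht.1).1
    have huT : u ∈ χ'.G.VT := by have := ht.2.1; rw [h2T] at this; exact this.1
    have hvT : v ∈ χ'.G.VT := by have := ht.2.2; rw [h2T] at this; exact this.1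
    exact (h2pm u v ht).trans (h1pm u v ⟨hA', huT, hvT⟩)
  · intro v hv
    rw [h2ι v hv, h1ι v (hsub2 hv)]
    rfl

end TreeContainment
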